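/- arXiv:1403.6386 — 2 statements merged into one kernel-verified Lean document; each statement's English description precedes it below -/
import Mathlib

section
/- Let T be an ℓ-complete tree decomposition of a graph G rooted at a node u, let v be a node of T distinct from u, and let α be a (V∖B_u)-coherent coloring of G such that some color a does not appear on B_u. If some vertex of B_v is colored a by α, then every bag of T_v (the subtree of T rooted at v) contains a vertex colored a by α. -/
open SimpleGraph

/-- A proper `k`-coloring of a graph. -/
def Proper {V : Type} (G : SimpleGraph V) {k : ℕ} (c : V → Fin k) : Prop :=
  ∀ ⦃x y⦄, G.Adj x y → c x ≠ c y

/-- The `k`-recoloring graph of `G`: vertices are the proper `k`-colorings of `G`,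
two colorings being adjacent when they differ on exactly one vertex. -/
def recolorGraph {V : Type} (G : SimpleGraph V) (k : ℕ) :
    SimpleGraph {c : V → Fin k // Proper G c} where
  Adj c d := ∃! v, c.1 v ≠ d.1 v
  symm := by
    constructor
    rintro c d ⟨v, hv, hu⟩
    exact ⟨v, hv.symm, fun w hw => hu w hw.symm⟩
  loopless := by
    constructor
    rintro c ⟨v, hv, -⟩
    exact hv rfl

/-- `c` is a greedy (grundy) coloring of `G` relative to some vertex order:
equivalently, it is proper and every vertex sees every smaller color in its
neighborhood. -/
def IsGrundy {V : Type} (G : SimpleGraph V) (c : V → ℕ) : Prop :=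
  (∀ ⦃x y⦄, G.Adj x y → c x ≠ c y) ∧ ∀ v, ∀ j < c v, ∃ u, G.Adj v u ∧ c u = j

/-- The grundy number of `G`: the largest number of colors of a greedy coloring. -/
noncomputable def grundyNum {V : Type} [Fintype V] (G : SimpleGraph V) : ℕ :=
  sSup {ℓ | ∃ c : V → ℕ, IsGrundy G c ∧ (Finset.univ.image c).card = ℓ}

/-- A tree decomposition of the graph `G`, with nodes indexed by `ι`. -/
structure TreeDecomp {V : Type} (G : SimpleGraph V) (ι : Type) where
  T : SimpleGraph ι
  isTree : T.IsTree
  bag : ι → Finset V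
  mem_bag : ∀ x : V, ∃ u, x ∈ bag u
  edge_bag : ∀ ⦃x y⦄, G.Adj x y → ∃ u, x ∈ bag u ∧ y ∈ bag u
  support_connected : ∀ x : V, (T.induce {u | x ∈ bag u}).Connected

/-- The treewidth of a finite graph: the least `w` such that some tree decomposition
has all bags of size at most `w + 1`. -/
noncomputable def treewidth {V : Type} [Fintype V] (G : SimpleGraph V) : ℕ :=
  sInf {w | ∃ (m : ℕ) (td : TreeDecomp G (Fin m)), ∀ u, (td.bag u).card ≤ w + 1}

/-- An `ℓ`-complete tree decomposition: every bag has size `ℓ+1` and adjacent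
bags intersect on `ℓ` vertices. -/
def TreeDecomp.IsComplete {V ι : Type} [DecidableEq V] {G : SimpleGraph V}
    (td : TreeDecomp G ι) (ℓ : ℕ) : Prop :=
  (∀ u, (td.bag u).card = ℓ + 1) ∧
  ∀ ⦃u v⦄, td.T.Adj u v → (td.bag u ∩ td.bag v).card = ℓ

/-- `x` and `y` are `T`-parents: for some adjacent nodes `u, v`,
`x = B_u ∖ B_v` and `y = B_v ∖ B_u`. -/
def TreeDecomp.Parent {V ι : Type} [DecidableEq V] {G : SimpleGraph V}
    (td : TreeDecomp G ι) (x y : V) : Prop :=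
  ∃ u v, td.T.Adj u v ∧ td.bag u \ td.bag v = {x} ∧ td.bag v \ td.bag u = {y}

/-- A coloring is `X`-coherent (relative to a tree decomposition) if parents in `X`
get the same color and every vertex of `X` is the unique vertex of its color in
every bag containing it. -/
def TreeDecomp.Coherent {V ι : Type} [DecidableEq V] {G : SimpleGraph V}
    (td : TreeDecomp G ι) (X : Set V) {k : ℕ} (c : V → Fin k) : Prop :=
  (∀ ⦃x y⦄, x ∈ X → y ∈ X → td.Parent x y → c x = c y) ∧
  ∀ u, ∀ x ∈ X, x ∈ td.bag u → ∀ y ∈ td.bag u, c y = c x → y = x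

/-- The subtree rooted at `v` when `T` is rooted at `u`: the nodes all of whose
walks to the root `u` pass through `v`. -/
def subtreeAt {ι : Type} (T : SimpleGraph ι) (u v : ι) : Set ι :=
  {p | ∀ w : T.Walk p u, v ∈ w.support}

/-- `G` contains an induced path on four vertices. -/
def HasInducedP4 {V : Type} (G : SimpleGraph V) : Prop :=
  ∃ a b c d : V, a ≠ b ∧ a ≠ c ∧ a ≠ d ∧ b ≠ c ∧ b ≠ d ∧ c ≠ d ∧
    G.Adj a b ∧ G.Adj b c ∧ G.Adj c d ∧ ¬G.Adj a c ∧ ¬G.Adj a d ∧ ¬G.Adj b d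

/-- `G` contains an induced path on five vertices. -/
def HasInducedP5 {V : Type} (G : SimpleGraph V) : Prop :=
  ∃ a b c d e : V, a ≠ b ∧ a ≠ c ∧ a ≠ d ∧ a ≠ e ∧ b ≠ c ∧ b ≠ d ∧ b ≠ e ∧
    c ≠ d ∧ c ≠ e ∧ d ≠ e ∧
    G.Adj a b ∧ G.Adj b c ∧ G.Adj c d ∧ G.Adj d e ∧
    ¬G.Adj a c ∧ ¬G.Adj a d ∧ ¬G.Adj a e ∧ ¬G.Adj b d ∧ ¬G.Adj b e ∧ ¬G.Adj c e

/-- A walk is an induced path if it is a path and the only adjacencies among its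
vertices are its own edges. -/
def IsInducedPathW {V : Type} (G : SimpleGraph V) {x y : V} (p : G.Walk x y) : Prop :=
  p.IsPath ∧ ∀ ⦃u v⦄, u ∈ p.support → v ∈ p.support → G.Adj u v → s(u, v) ∈ p.edges

/-- A graph is distance-hereditary if any two induced paths between the same pair of
vertices have the same length. -/
def IsDistanceHereditary {V : Type} (G : SimpleGraph V) : Prop :=
  ∀ (x y : V) (p q : G.Walk x y),
    IsInducedPathW G p → IsInducedPathW G q → p.length = q.length

/-- `X` is a module of `G`: every outside vertex is adjacent to all of `X` or none of it. -/
def IsModule {V : Type} (G : SimpleGraph V) (X : Set V) : Prop :=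
  ∀ y ∉ X, (∀ x ∈ X, G.Adj y x) ∨ ∀ x ∈ X, ¬G.Adj y x

/-- `X` is a strong module of `G`: a module of size at least two which overlaps
no other module. -/
def IsStrongModule {V : Type} (G : SimpleGraph V) (X : Set V) : Prop :=
  IsModule G X ∧ 2 ≤ X.ncard ∧
    ∀ M : Set V, IsModule G M → Disjoint M X ∨ M ⊆ X ∨ X ⊆ M

/-- The setoid identifying all elements of `C`. -/
def mergedSetoid {V : Type} (C : Set V) : Setoid V where
  r x y := x = y ∨ (x ∈ C ∧ y ∈ C)
  iseqv := by
    refine ⟨fun x => Or.inl rfl, ?_, ?_⟩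
    · rintro x y (rfl | ⟨h1, h2⟩)
      · exact Or.inl rfl
      · exact Or.inr ⟨h2, h1⟩
    · rintro x y z (rfl | ⟨h1, h2⟩) (rfl | ⟨h3, h4⟩)
      · exact Or.inl rfl
      · exact Or.inr ⟨h3, h4⟩
      · exact Or.inr ⟨h1, h2⟩
      · exact Or.inr ⟨h1, h4⟩

/-- The merged graph on an independent set `C`: all vertices of `C` are identified
into a single vertex. -/
def mergedGraph {V : Type} (G : SimpleGraph V) (C : Set V)
    (hC : ∀ x ∈ C, ∀ y ∈ C, ¬G.Adj x y) :
    SimpleGraph (Quotient (mergedSetoid C)) where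
  Adj a b := ∃ x y, G.Adj x y ∧ Quotient.mk (mergedSetoid C) x = a ∧
    Quotient.mk (mergedSetoid C) y = b
  symm := by
    constructor
    rintro a b ⟨x, y, hxy, rfl, rfl⟩
    exact ⟨y, x, hxy.symm, rfl, rfl⟩
  loopless := by
    constructor
    rintro a ⟨x, y, hxy, rfl, h⟩
    rcases Quotient.exact h with rfl | ⟨h1, h2⟩
    · exact G.irrefl hxy
    · exact hC x h2 y h1 hxy

/-- `α` can be transformed into `β` by single-vertex recolorings through proper
`k`-colorings of `G`, recoloring each vertex `v` at most `bound v` times. -/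
def RecolorSeqLe {V : Type} (G : SimpleGraph V) {k : ℕ} (α β : V → Fin k)
    (bound : V → ℕ) : Prop :=
  ∃ (m : ℕ) (c : ℕ → V → Fin k),
    c 0 = α ∧ c m = β ∧ (∀ i ≤ m, Proper G (c i)) ∧
    (∀ i < m, ∃! v, c i v ≠ c (i + 1) v) ∧
    ∀ v, ((Finset.range m).filter fun i => c i v ≠ c (i + 1) v).card ≤ bound v

/-- A modular coloring: for every strong module `M` which is the disjoint union of
`p ≥ 2` strong modules `Ms 0, …, Ms (p-1)`, the coloring uses exactly `χ(H[M])`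
colors on `M`, and each `Ms i` receives exactly the first `χ(H[Ms i])` of those colors. -/
def ModularColoring {W : Type} (H : SimpleGraph W) {k : ℕ} (c : W → Fin k) : Prop :=
  ∀ (M : Set W) (p : ℕ) (Ms : Fin p → Set W), 2 ≤ p →
    IsStrongModule H M → (∀ i, IsStrongModule H (Ms i)) →
    (Pairwise fun i j => Disjoint (Ms i) (Ms j)) →
    M = ⋃ i, Ms i →
    (∀ i j, i ≠ j → ∀ x ∈ Ms i, ∀ y ∈ Ms j, ¬H.Adj x y) →
    ((c '' M).ncard : ℕ∞) = (H.induce M).chromaticNumber ∧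
    ∀ i, ((c '' Ms i).ncard : ℕ∞) = (H.induce (Ms i)).chromaticNumber ∧
      ∀ a ∈ c '' Ms i, ∀ b ∈ c '' M, b ≤ a → b ∈ c '' Ms i

/-- A frozen `k`-coloring: a proper coloring in which every vertex sees every other
color in its neighborhood. -/
def Frozen {V : Type} (G : SimpleGraph V) {k : ℕ} (c : V → Fin k) : Prop :=
  Proper G c ∧ ∀ x, ∀ b : Fin k, b ≠ c x → ∃ y, G.Adj x y ∧ c y = b

/-- Let `T` be an `ℓ`-complete tree decomposition rooted at `u`,
let `v ≠ u`, and let `α` be a `(V ∖ B_u)`-coherent coloring in which some color `a`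
does not appear on `B_u`. If some vertex of `B_v` is colored `a`, then every bag of
the subtree rooted at `v` contains a vertex colored `a`. -/
theorem color_everywhere_in_subtree (n ℓ k : ℕ) (V : Type) [DecidableEq V]
    (G : SimpleGraph V) (td : TreeDecomp G (Fin n)) (hcomp : td.IsComplete ℓ)
    (u v : Fin n) (hvu : v ≠ u)
    (α : V → Fin k) (hα : Proper G α)
    (hcoh : td.Coherent {x : V | x ∉ td.bag u} α)
    (a : Fin k) (ha : ∀ x ∈ td.bag u, α x ≠ a)
    (hv : ∃ x ∈ td.bag v, α x = a) :
    ∀ p ∈ subtreeAt td.T u v, ∃ x ∈ td.bag p, α x = a := by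
  classical
  suffices H : ∀ (m : ℕ) (p : Fin n) (W : td.T.Walk p u), W.length ≤ m → W.IsPath →
      p ∈ subtreeAt td.T u v → ∃ x ∈ td.bag p, α x = a by
    intro p hp
    obtain ⟨W⟩ := td.isTree.isConnected.preconnected p u
    exact H W.bypass.length p W.bypass le_rfl W.bypass_isPath hp
  intro m
  induction m with
  | zero =>
    intro p W hlen _ hp
    exfalso
    have hpu : p = u := W.eq_of_length_eq_zero (Nat.le_zero.mp hlen)
    subst hpu
    have := hp SimpleGraph.Walk.nil
    simp [SimpleGraph.Walk.support_nil] at this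
    exact hvu this
  | succ m ih =>
    intro p W hlen hpath hp
    cases W with
    | nil =>
      exfalso
      have := hp SimpleGraph.Walk.nil
      simp [SimpleGraph.Walk.support_nil] at this
      exact hvu this
    | @cons _ q _ h W' =>
      by_cases hpv : p = v
      · subst hpv; exact hv
      -- q is also in the subtree
      have hq : q ∈ subtreeAt td.T u v := by
        intro W2
        have := hp (SimpleGraph.Walk.cons h W2)
        simp [SimpleGraph.Walk.support_cons] at this
        rcases this with h1 | h1
        · exact absurd h1.symm hpv
        · exact h1
      obtain ⟨z, hzq, hza⟩ := ih q W' (by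
        have := SimpleGraph.Walk.length_cons h W'
        omega) hpath.of_cons hq
      -- cardinalities
      have hcap : (td.bag p ∩ td.bag q).card = ℓ := hcomp.2 h
      have hcq : (td.bag q).card = ℓ + 1 := hcomp.1 q
      have hcp : (td.bag p).card = ℓ + 1 := hcomp.1 p
      have hc1 : (td.bag q \ td.bag p).card = 1 := by
        have h1 := Finset.card_sdiff_add_card_inter (td.bag q) (td.bag p)
        rw [Finset.inter_comm] at h1
        omega
      have hc2 : (td.bag p \ td.bag q).card = 1 := by
        have h1 := Finset.card_sdiff_add_card_inter (td.bag p) (td.bag q)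
        omega
      obtain ⟨x, hx⟩ := Finset.card_eq_one.mp hc1
      obtain ⟨y, hy⟩ := Finset.card_eq_one.mp hc2
      by_cases hzp : z ∈ td.bag p
      · exact ⟨z, hzp, hza⟩
      -- z must be x
      have hzx : z = x := by
        have : z ∈ td.bag q \ td.bag p := Finset.mem_sdiff.mpr ⟨hzq, hzp⟩
        rw [hx] at this
        exact Finset.mem_singleton.mp this
      subst hzx
      have hxa : α z = a := hza
      have hxu : z ∉ td.bag u := fun hh => ha z hh hxa
      have hymem : y ∈ td.bag p \ td.bag q := by rw [hy]; exact Finset.mem_singleton_self y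
      have hyp : y ∈ td.bag p := (Finset.mem_sdiff.mp hymem).1
      have hyq : y ∉ td.bag q := (Finset.mem_sdiff.mp hymem).2
      -- y is not in the root bag
      have hyu : y ∉ td.bag u := by
        intro hyu
        -- walk from p to u within bags containing y
        obtain ⟨Wy⟩ := (td.support_connected y).preconnected
          (⟨p, hyp⟩ : {w : Fin n | y ∈ td.bag w}) ⟨u, hyu⟩
        let f : (td.T.induce {w : Fin n | y ∈ td.bag w}) →g td.T :=
          ⟨Subtype.val, fun hab => hab⟩
        let Wm : td.T.Walk p u := Wy.map f
        have hysup : ∀ w ∈ Wm.support, y ∈ td.bag w := by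
          intro w hw
          rw [SimpleGraph.Walk.support_map] at hw
          obtain ⟨s, _, rfl⟩ := List.mem_map.mp hw
          exact s.2
        -- q is on every path from p to u
        have hpaths : (⟨Wm.bypass, Wm.bypass_isPath⟩ : td.T.Path p u) =
            ⟨SimpleGraph.Walk.cons h W', hpath⟩ :=
          td.isTree.IsAcyclic.path_unique _ _
        have hqsup : q ∈ Wm.bypass.support := by
          have : Wm.bypass = SimpleGraph.Walk.cons h W' := congrArg Subtype.val hpaths
          rw [this]
          simp [SimpleGraph.Walk.support_cons]
        exact hyq (hysup q (Wm.support_bypass_subset hqsup))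
      -- coherence transfers the color
      have hpar : td.Parent z y := ⟨q, p, h.symm, hx, hy⟩
      have := hcoh.1 hxu hyu hpar
      exact ⟨y, hyp, by rw [← this]; exact hxa⟩
end

section
/- For every graph G, every vertex x of G belongs to at most 2·χ(G) distinct strong modules of G. -/
open SimpleGraph

section StrongModuleAux

/-- Natural-number chromatic number of an induced subgraph. -/
noncomputable def cnat {V : Type} [Fintype V] (G : SimpleGraph V) (M : Set V) : ℕ :=
  (G.induce M).chromaticNumber.toNat

lemma cnat_colorable {V : Type} [Fintype V] (G : SimpleGraph V) (M : Set V) :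
    (G.induce M).Colorable (cnat G M) :=
  colorable_chromaticNumber_of_fintype _

lemma le_cnat {V : Type} [Fintype V] (G : SimpleGraph V) (M : Set V) {n : ℕ}
    (h : (G.induce M).Colorable n) : cnat G M ≤ n := by
  have := h.chromaticNumber_le
  exact_mod_cast ENat.toNat_le_of_le_coe this

lemma cnat_mono {V : Type} [Fintype V] (G : SimpleGraph V) {M N : Set V} (h : M ⊆ N) :
    cnat G M ≤ cnat G N := by
  obtain ⟨C⟩ := cnat_colorable G N
  refine le_cnat G M ⟨Coloring.mk (fun v => C ⟨v.1, h v.2⟩) ?_⟩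
  rintro ⟨a, ha⟩ ⟨b, hb⟩ hab
  exact C.valid (by simpa using hab)

lemma cnat_pos {V : Type} [Fintype V] (G : SimpleGraph V) {M : Set V} {x : V}
    (hx : x ∈ M) : 1 ≤ cnat G M := by
  by_contra h
  obtain ⟨C⟩ := cnat_colorable G M
  rw [Nat.lt_one_iff.mp (not_le.mp h)] at C
  exact (C ⟨x, hx⟩).elim0

lemma cnat_step {V : Type} [Fintype V] (G : SimpleGraph V) {M N : Set V} {y : V}
    (hMN : M ⊆ N) (hy : y ∈ N) (hadj : ∀ z ∈ M, G.Adj y z) :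
    cnat G M + 1 ≤ cnat G N := by
  obtain ⟨C⟩ := cnat_colorable G N
  have hpos : 1 ≤ cnat G N := cnat_pos G hy
  set a : Fin (cnat G N) := C ⟨y, hy⟩ with ha
  have key : (G.induce M).Colorable (cnat G N - 1) := by
    have C' : (G.induce M).Coloring {b : Fin (cnat G N) // b ≠ a} := by
      refine Coloring.mk (fun v => ⟨C ⟨v.1, hMN v.2⟩, ?_⟩) ?_
      · intro hcon
        exact C.valid (show (G.induce N).Adj ⟨v.1, _⟩ ⟨y, hy⟩ by
          simpa using (hadj v.1 v.2).symm) hcon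
      · rintro ⟨u, hu⟩ ⟨v, hv⟩ huv hcon
        exact C.valid (show (G.induce N).Adj ⟨u, hMN hu⟩ ⟨v, hMN hv⟩ by simpa using huv)
          (by simpa using congrArg Subtype.val hcon)
    have := C'.colorable
    rwa [Fintype.card_subtype_compl, Fintype.card_subtype_eq, Fintype.card_fin] at this
  have := le_cnat G M key
  omega

lemma no_two_noncomplete {V : Type} (G : SimpleGraph V) {X Y Z : Set V} {x y0 z0 : V}
    (hXY : X ⊆ Y) (hYZ : Y ⊆ Z) (hZ : IsModule G Z) (hY : IsStrongModule G Y)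
    (hx : x ∈ X) (hy0 : y0 ∈ Y) (hy0X : y0 ∉ X) (hz0 : z0 ∈ Z) (hz0Y : z0 ∉ Y)
    (h1 : ∀ y ∈ Y, y ∉ X → ∀ z ∈ X, ¬G.Adj y z)
    (h2 : ∀ w ∈ Z, w ∉ Y → ∀ z ∈ Y, ¬G.Adj w z) : False := by
  have hM : IsModule G (X ∪ (Z \ Y)) := by
    intro w hw
    by_cases hwY : w ∈ Y
    · have hwX : w ∉ X := fun h => hw (Or.inl h)
      right
      rintro v (hv | ⟨hvZ, hvY⟩)
      · exact h1 w hwY hwX v hv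
      · exact fun hadj => h2 v hvZ hvY w hwY hadj.symm
    · have hwZ : w ∉ Z := fun h => hw (Or.inr ⟨h, hwY⟩)
      rcases hZ w hwZ with h | h
      · exact Or.inl (by rintro v (hv | ⟨hvZ, _⟩); exacts [h v (hYZ (hXY hv)), h v hvZ])
      · exact Or.inr (by rintro v (hv | ⟨hvZ, _⟩); exacts [h v (hYZ (hXY hv)), h v hvZ])
  rcases hY.2.2 _ hM with h | h | h
  · exact Set.disjoint_left.mp h (Or.inl hx) (hXY hx)
  · exact hz0Y (h (Or.inr ⟨hz0, hz0Y⟩))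
  · rcases h hy0 with h' | ⟨_, h'⟩
    · exact hy0X h'
    · exact h' hy0

end StrongModuleAux

/-- Every vertex of a graph `G` belongs to at most `2·χ(G)`
distinct strong modules of `G`. -/
theorem strong_modules_through_vertex (V : Type) [Fintype V] (G : SimpleGraph V)
    (x : V) :
    ({M : Set V | IsStrongModule G M ∧ x ∈ M}.ncard : ℕ∞) ≤
      2 * G.chromaticNumber := by
  classical
  set S : Set (Set V) := {M : Set V | IsStrongModule G M ∧ x ∈ M} with hSdef
  have hSfin : S.Finite := Set.toFinite S
  have hchain : ∀ M ∈ S, ∀ N ∈ S, M ⊆ N ∨ N ⊆ M := by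
    intro M hM N hN
    rcases hN.1.2.2 M hM.1.1 with h | h | h
    · exact absurd hN.2 (fun hx' => Set.disjoint_left.mp h hM.2 hx')
    · exact Or.inl h
    · exact Or.inr h
  have hgreat : ∀ T : Set (Set V), T ⊆ S → T.Nonempty → ∃ N ∈ T, ∀ P ∈ T, P ⊆ N := by
    intro T hTS hTne
    obtain ⟨N, hN, hmax⟩ := Set.Finite.exists_maximalFor id T (hSfin.subset hTS) hTne
    refine ⟨N, hN, fun P hP => ?_⟩
    rcases hchain P (hTS hP) N (hTS hN) with h | h
    · exact h
    · exact hmax hP h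
  have hsubfin : ∀ M : Set V, {P | P ∈ S ∧ P ⊆ M}.Finite := fun M => Set.toFinite _
  have hsplit : ∀ M ∈ S, ∀ N ∈ S, N ⊆ M → N ≠ M → (∀ P ∈ S, P ⊆ M → P ≠ M → P ⊆ N) →
      {P | P ∈ S ∧ P ⊆ M}.ncard = {P | P ∈ S ∧ P ⊆ N}.ncard + 1 := by
    intro M hM N hNS hNM hNne hNgr
    have heq : {P | P ∈ S ∧ P ⊆ M} = insert M {P | P ∈ S ∧ P ⊆ N} := by
      ext P
      constructor
      · rintro ⟨hP, hPM⟩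
        by_cases hPe : P = M
        · exact Or.inl hPe
        · exact Or.inr ⟨hP, hNgr P hP hPM hPe⟩
      · rintro (rfl | ⟨hP, hPN⟩)
        · exact ⟨hM, subset_rfl⟩
        · exact ⟨hP, hPN.trans hNM⟩
    have hnot : M ∉ {P | P ∈ S ∧ P ⊆ N} := by
      rintro ⟨-, hMN⟩
      exact hNne (hNM.antisymm hMN)
    rw [heq, Set.ncard_insert_of_notMem hnot (hsubfin N)]
  -- the key counting claim
  have key : ∀ k : ℕ, ∀ M ∈ S, {P | P ∈ S ∧ P ⊆ M}.ncard = k → k ≤ 2 * cnat G M := by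
    intro k
    induction k using Nat.strong_induction_on with
    | _ k IH =>
    intro M hM hk
    have hMpos : 1 ≤ cnat G M := cnat_pos G hM.2
    by_cases hex : ∃ P ∈ S, P ⊆ M ∧ P ≠ M
    · obtain ⟨N, ⟨hNS, hNM, hNne⟩, hNgr⟩ :=
        hgreat {P | P ∈ S ∧ P ⊆ M ∧ P ≠ M} (fun P hP => hP.1) hex
      have hcard := hsplit M hM N hNS hNM hNne (fun P hP h1 h2 => hNgr P ⟨hP, h1, h2⟩)
      set kN := {P | P ∈ S ∧ P ⊆ N}.ncard with hkN
      have hkNk : kN < k := by omega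
      have hIHN := IH kN hkNk N hNS rfl
      by_cases hcomp : ∃ y ∈ M, y ∉ N ∧ ∀ z ∈ N, G.Adj y z
      · obtain ⟨y, hyM, hyN, hadj⟩ := hcomp
        have := cnat_step G hNM hyM hadj
        omega
      · -- every vertex of M \ N is nonadjacent to all of N
        have h1M : ∀ y ∈ M, y ∉ N → ∀ z ∈ N, ¬G.Adj y z := by
          intro y hyM hyN
          rcases hNS.1.1 y hyN with h | h
          · exact absurd ⟨y, hyM, hyN, h⟩ hcomp
          · exact h
        by_cases hex2 : ∃ P ∈ S, P ⊆ N ∧ P ≠ N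
        · obtain ⟨N', ⟨hN'S, hN'N, hN'ne⟩, hN'gr⟩ :=
            hgreat {P | P ∈ S ∧ P ⊆ N ∧ P ≠ N} (fun P hP => hP.1) hex2
          have hcard2 := hsplit N hNS N' hN'S hN'N hN'ne (fun P hP h1 h2 => hN'gr P ⟨hP, h1, h2⟩)
          set kN' := {P | P ∈ S ∧ P ⊆ N'}.ncard with hkN'
          have hIHN' := IH kN' (by omega) N' hN'S rfl
          -- the step N' → N must be complete
          have hcomp2 : ∃ y ∈ N, y ∉ N' ∧ ∀ z ∈ N', G.Adj y z := by
            by_contra hcon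
            have h1N : ∀ y ∈ N, y ∉ N' → ∀ z ∈ N', ¬G.Adj y z := by
              intro y hyN hyN'
              rcases hN'S.1.1 y hyN' with h | h
              · exact absurd ⟨y, hyN, hyN', h⟩ hcon
              · exact h
            obtain ⟨y0, hy0N, hy0N'⟩ := Set.exists_of_ssubset (hN'N.ssubset_of_ne hN'ne)
            obtain ⟨z0, hz0M, hz0N⟩ := Set.exists_of_ssubset (hNM.ssubset_of_ne hNne)
            exact no_two_noncomplete G hN'N hNM hM.1.1 hNS.1 hN'S.2 hy0N hy0N' hz0M hz0N
              h1N h1M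
          obtain ⟨y, hyN, hyN', hadj⟩ := hcomp2
          have hstep := cnat_step G hN'N hyN hadj
          have hmono := cnat_mono G hNM
          omega
        · -- N has no proper strong submodule through x : kN = 1
          have hone : {P | P ∈ S ∧ P ⊆ N} = {N} := by
            ext P
            constructor
            · rintro ⟨hP, hPN⟩
              by_contra hne
              exact hex2 ⟨P, hP, hPN, hne⟩
            · rintro rfl
              exact ⟨hNS, subset_rfl⟩
          rw [hone, Set.ncard_singleton] at hkN
          omega
    · have hone : {P | P ∈ S ∧ P ⊆ M} = {M} := by
        ext P
        constructor
        · rintro ⟨hP, hPM⟩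
          by_contra hne
          exact hex ⟨P, hP, hPM, hne⟩
        · rintro rfl
          exact ⟨hM, subset_rfl⟩
      rw [hone, Set.ncard_singleton] at hk
      omega
  -- conclude
  rcases Set.eq_empty_or_nonempty S with hSe | hSne
  · rw [hSe]
    simp
  · obtain ⟨Mt, hMt, hMtgr⟩ := hgreat S subset_rfl hSne
    have hsub : {P | P ∈ S ∧ P ⊆ Mt} = S := by
      ext P
      exact ⟨fun h => h.1, fun h => ⟨h, hMtgr P h⟩⟩
    have hkey := key S.ncard Mt hMt (by rw [hsub])
    have hmono : cnat G Mt ≤ G.chromaticNumber.toNat := by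
      obtain ⟨C⟩ := G.colorable_chromaticNumber_of_fintype
      exact le_cnat G Mt ⟨Coloring.mk (fun v => C v.1) (fun {a b} h => C.valid (by simpa using h))⟩
    have hne : G.chromaticNumber ≠ ⊤ := by
      rw [chromaticNumber_ne_top_iff_exists]
      exact ⟨_, G.colorable_of_fintype⟩
    calc (S.ncard : ℕ∞) ≤ ((2 * G.chromaticNumber.toNat : ℕ) : ℕ∞) := by
          exact_mod_cast hkey.trans (by omega)
      _ = 2 * G.chromaticNumber := by
          rw [Nat.cast_mul, ENat.coe_toNat hne]
          norm_num
end
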